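/- Let d ≥ 1, let G be a d×d real matrix with nonnegative entries, and let Θ, ς : ℕ → ℝ^d be sequences of entrywise nonnegative vectors such that Θ(k+1) ≼ G·Θ(k) + ς(k) entrywise for every k ∈ ℕ. Suppose there are constants Π > 0, ς̃ ≥ 0, and 0 < ρ̂ < ξ such that ‖G^j‖ ≤ Π·ρ̂^j for every j ∈ ℕ (where ‖·‖ is the operator norm induced by the Euclidean norm on ℝ^d) and ‖ς(l)‖₂ ≤ ς̃·ξ^l for every l ∈ ℕ. Then for every k ∈ ℕ, ‖Θ(k)‖₂ ≤ Π·‖Θ(0)‖₂·ρ̂^k + (ς̃·Π/(ξ−ρ̂))·ξ^k. -/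

import Mathlib

/-- Linear convergence bound: if `Θ(k+1) ≼ GΘ(k) + ς(k)` entrywise with
nonnegative data, `‖G^j‖ ≤ Π ρ̂^j` in the Euclidean operator norm and `‖ς(l)‖₂ ≤ ς̃ ξ^l`
with `0 < ρ̂ < ξ`, then `‖Θ(k)‖₂ ≤ Π‖Θ(0)‖₂ ρ̂^k + (ς̃Π/(ξ−ρ̂)) ξ^k`. -/
theorem stmt_14 (d : ℕ) (hd : 1 ≤ d) (G : Matrix (Fin d) (Fin d) ℝ)
    (hG : ∀ i j, 0 ≤ G i j)
    (Θ ς : ℕ → EuclideanSpace ℝ (Fin d))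
    (hΘ : ∀ k i, 0 ≤ Θ k i) (hς : ∀ k i, 0 ≤ ς k i)
    (hrec : ∀ k i, Θ (k + 1) i ≤ (Matrix.toEuclideanCLM (𝕜 := ℝ) G) (Θ k) i + ς k i)
    (Cpi ςt ρ ξ : ℝ) (hCpi : 0 < Cpi) (hςt : 0 ≤ ςt) (hρ : 0 < ρ) (hρξ : ρ < ξ)
    (hGnorm : ∀ j : ℕ, ‖Matrix.toEuclideanCLM (𝕜 := ℝ) (G ^ j)‖ ≤ Cpi * ρ ^ j)
    (hςb : ∀ l : ℕ, ‖ς l‖ ≤ ςt * ξ ^ l) :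
    ∀ k : ℕ, ‖Θ k‖ ≤ Cpi * ‖Θ 0‖ * ρ ^ k + ςt * Cpi / (ξ - ρ) * ξ ^ k := by
  set T := Matrix.toEuclideanCLM (𝕜 := ℝ) G with hT
  have hξ : 0 < ξ := hρ.trans hρξ
  have hξρ : 0 < ξ - ρ := by linarith
  have hcoord : ∀ (x : EuclideanSpace ℝ (Fin d)) (i : Fin d),
      T x i = ∑ j, G i j * x j := by
    intro x i
    have h2 := congrFun (Matrix.ofLp_toEuclideanCLM (𝕜 := ℝ) G x) i
    simp [hT, Matrix.mulVec, dotProduct]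
  have hmono : ∀ (x y : EuclideanSpace ℝ (Fin d)), (∀ i, x i ≤ y i) →
      ∀ i, T x i ≤ T y i := by
    intro x y h i
    rw [hcoord, hcoord]
    exact Finset.sum_le_sum fun j _ => mul_le_mul_of_nonneg_left (h j) (hG i j)
  set B : ℕ → EuclideanSpace ℝ (Fin d) := fun k =>
    (T ^ k) (Θ 0) + ∑ l ∈ Finset.range k, (T ^ l) (ς (k - 1 - l)) with hB
  have hpow : ∀ (n : ℕ) (x : EuclideanSpace ℝ (Fin d)), T ((T ^ n) x) = (T ^ (n+1)) x := by
    intro n x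
    rw [pow_succ']
    rfl
  have hstep : ∀ k, B (k + 1) = T (B k) + ς k := by
    intro k
    have : ∀ l ∈ Finset.range k, (T ^ (l+1)) (ς (k - (l+1))) = T ((T ^ l) (ς (k - 1 - l))) := by
      intro l _
      have hnat : k - (l+1) = k - 1 - l := by omega
      rw [hnat, hpow]
    calc B (k+1) = (T ^ (k+1)) (Θ 0) + ∑ l ∈ Finset.range (k+1), (T ^ l) (ς (k - l)) := by
          simp [hB]
      _ = (T ^ (k+1)) (Θ 0) + ((∑ l ∈ Finset.range k, (T ^ (l+1)) (ς (k - (l+1)))) + (T ^ 0) (ς (k - 0))) := by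
          rw [Finset.sum_range_succ']
      _ = T ((T ^ k) (Θ 0)) + (∑ l ∈ Finset.range k, T ((T ^ l) (ς (k - 1 - l))) + ς k) := by
          rw [hpow, Finset.sum_congr rfl this]; simp
      _ = T (B k) + ς k := by
          rw [hB]; simp [map_add, map_sum]; abel
  have hkey : ∀ k i, Θ k i ≤ B k i := by
    intro k
    induction k with
    | zero => intro i; simp [hB]
    | succ k ih =>
      intro i
      have h1 := hrec k i
      have h2 : T (Θ k) i ≤ T (B k) i := hmono _ _ ih i
      have h3 : B (k+1) i = T (B k) i + ς k i := by
        rw [hstep k]; rfl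
      rw [h3]
      exact le_trans h1 (by linarith)
  intro k
  have hnorm1 : ‖Θ k‖ ≤ ‖B k‖ := by
    rw [EuclideanSpace.norm_eq, EuclideanSpace.norm_eq]
    apply Real.sqrt_le_sqrt
    apply Finset.sum_le_sum
    intro i _
    have h1 := hΘ k i
    have h2 := hkey k i
    simp only [Real.norm_eq_abs, sq_abs]
    exact sq_le_sq' (by linarith) h2
  have hTn : ∀ n : ℕ, ‖(T ^ n : EuclideanSpace ℝ (Fin d) →L[ℝ] EuclideanSpace ℝ (Fin d))‖ ≤ Cpi * ρ ^ n := by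
    intro n
    have := hGnorm n
    rwa [map_pow] at this
  have hnorm2 : ‖B k‖ ≤ Cpi * ρ ^ k * ‖Θ 0‖ + ∑ l ∈ Finset.range k, Cpi * ρ ^ l * (ςt * ξ ^ (k - 1 - l)) := by
    rw [hB]
    refine le_trans (norm_add_le _ _) (add_le_add ?_ ?_)
    · calc ‖(T ^ k) (Θ 0)‖ ≤ ‖(T ^ k : EuclideanSpace ℝ (Fin d) →L[ℝ] EuclideanSpace ℝ (Fin d))‖ * ‖Θ 0‖ :=
            ContinuousLinearMap.le_opNorm _ _
        _ ≤ Cpi * ρ ^ k * ‖Θ 0‖ := by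
            exact mul_le_mul_of_nonneg_right (hTn k) (norm_nonneg _)
    · refine le_trans (norm_sum_le _ _) (Finset.sum_le_sum ?_)
      intro l _
      calc ‖(T ^ l) (ς (k - 1 - l))‖
          ≤ ‖(T ^ l : EuclideanSpace ℝ (Fin d) →L[ℝ] EuclideanSpace ℝ (Fin d))‖ * ‖ς (k - 1 - l)‖ :=
            ContinuousLinearMap.le_opNorm _ _
        _ ≤ (Cpi * ρ ^ l) * (ςt * ξ ^ (k - 1 - l)) := by
            apply mul_le_mul (hTn l) (hςb _) (norm_nonneg _)
            positivity
  have hgeom : ∑ l ∈ Finset.range k, ρ ^ l * ξ ^ (k - 1 - l) = (ξ ^ k - ρ ^ k) / (ξ - ρ) := by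
    have h := geom_sum₂_mul ρ ξ k
    field_simp
    linarith [h]
  have hsum : ∑ l ∈ Finset.range k, Cpi * ρ ^ l * (ςt * ξ ^ (k - 1 - l))
      ≤ ςt * Cpi / (ξ - ρ) * ξ ^ k := by
    have : ∑ l ∈ Finset.range k, Cpi * ρ ^ l * (ςt * ξ ^ (k - 1 - l))
        = Cpi * ςt * ∑ l ∈ Finset.range k, ρ ^ l * ξ ^ (k - 1 - l) := by
      rw [Finset.mul_sum]; congr 1; ext l; ring
    rw [this, hgeom, show ςt * Cpi / (ξ - ρ) * ξ ^ k = Cpi * ςt * (ξ ^ k / (ξ - ρ)) by ring]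
    have h1 : (ξ ^ k - ρ ^ k) / (ξ - ρ) ≤ ξ ^ k / (ξ - ρ) :=
      (div_le_div_iff_of_pos_right hξρ).mpr (by linarith [pow_nonneg hρ.le k])
    exact mul_le_mul_of_nonneg_left h1 (by positivity)
  calc ‖Θ k‖ ≤ ‖B k‖ := hnorm1
    _ ≤ Cpi * ρ ^ k * ‖Θ 0‖ + ∑ l ∈ Finset.range k, Cpi * ρ ^ l * (ςt * ξ ^ (k - 1 - l)) := hnorm2
    _ ≤ Cpi * ‖Θ 0‖ * ρ ^ k + ςt * Cpi / (ξ - ρ) * ξ ^ k := by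
        rw [show Cpi * ρ ^ k * ‖Θ 0‖ = Cpi * ‖Θ 0‖ * ρ ^ k by ring]
        exact add_le_add_right hsum _
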